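/- Define ε(n) = 1 + (⌈log₂ n⌉ - log₂ n) - 2^(⌈log₂ n⌉ - log₂ n). Restricted to positive integers n, ε(n) never attains the value δ = 1 - log₂ e + log₂ log₂ e, but δ is the supremum of {ε(n) : n ∈ ℕ, n ≥ 1}. -/

import Mathlib

set_option maxHeartbeats 1000000

noncomputable def eps (n : ℝ) : ℝ :=
  1 + ((⌈Real.logb 2 n⌉ : ℝ) - Real.logb 2 n)
    - (2 : ℝ) ^ ((⌈Real.logb 2 n⌉ : ℝ) - Real.logb 2 n)

noncomputable def delta : ℝ :=
  1 - Real.logb 2 (Real.exp 1) + Real.logb 2 (Real.logb 2 (Real.exp 1))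

noncomputable def tstar : ℝ := -Real.log (Real.log 2) / Real.log 2

lemma hc0 : (0:ℝ) < Real.log 2 := Real.log_pos one_lt_two

lemma delta_eq : delta = 1 - 1 / Real.log 2 - Real.log (Real.log 2) / Real.log 2 := by
  have h1 : Real.logb 2 (Real.exp 1) = 1 / Real.log 2 := by simp [Real.logb]
  rw [delta, h1]
  rw [show (1:ℝ) / Real.log 2 = (Real.log 2)⁻¹ by ring, Real.logb, Real.log_inv]
  ring

lemma two_rpow (t : ℝ) : (2:ℝ) ^ t = Real.exp (Real.log 2 * t) :=
  Real.rpow_def_of_pos two_pos t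

lemma key_le (t : ℝ) : 1 + t - (2:ℝ) ^ t ≤ delta := by
  have h := Real.add_one_le_exp (Real.log 2 * t + Real.log (Real.log 2))
  rw [Real.exp_add, Real.exp_log hc0] at h
  rw [two_rpow, delta_eq]
  have e1 : Real.log (Real.log 2) / Real.log 2 * Real.log 2 = Real.log (Real.log 2) :=
    div_mul_cancel₀ _ (ne_of_gt hc0)
  have e2 : 1 / Real.log 2 * Real.log 2 = 1 := div_mul_cancel₀ _ (ne_of_gt hc0)
  nlinarith [h, hc0, e1, e2]

lemma key_lt {t : ℝ} (ht : t ≠ tstar) : 1 + t - (2:ℝ) ^ t < delta := by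
  have hu : Real.log 2 * t + Real.log (Real.log 2) ≠ 0 := by
    intro h
    apply ht
    rw [tstar, eq_div_iff (ne_of_gt hc0)]
    linarith [h]
  have h := Real.add_one_lt_exp hu
  rw [Real.exp_add, Real.exp_log hc0] at h
  rw [two_rpow, delta_eq]
  have e1 : Real.log (Real.log 2) / Real.log 2 * Real.log 2 = Real.log (Real.log 2) :=
    div_mul_cancel₀ _ (ne_of_gt hc0)
  have e2 : 1 / Real.log 2 * Real.log 2 = 1 := div_mul_cancel₀ _ (ne_of_gt hc0)
  nlinarith [h, hc0, e1, e2]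

lemma g_tstar : 1 + tstar - (2:ℝ) ^ tstar = delta := by
  have h2 : (2:ℝ) ^ tstar = (Real.log 2)⁻¹ := by
    rw [two_rpow, tstar, mul_div_assoc', mul_comm, mul_div_assoc,
      div_self (ne_of_gt hc0), mul_one, Real.exp_neg, Real.exp_log hc0]
  rw [h2, delta_eq, tstar]
  ring


namespace NivenAux
open Polynomial Finset


noncomputable def P (p n : ℕ) : Polynomial ℤ := X ^ n * (C (p:ℤ) - X) ^ n

noncomputable def Q (p n : ℕ) : Polynomial ℤ :=
  ∑ j ∈ Finset.range (2*n+1), C ((-1:ℤ)^j) * derivative^[j] (P p n)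

lemma natDegree_P_le (p n : ℕ) : (P p n).natDegree ≤ 2 * n := by
  refine (natDegree_mul_le).trans ?_
  have h1 : (X ^ n : Polynomial ℤ).natDegree ≤ n := by simp
  have h2 : ((C (p:ℤ) - X) ^ n).natDegree ≤ n := by
    refine (natDegree_pow_le).trans ?_
    have : (C (p:ℤ) - X).natDegree ≤ 1 := by
      refine (natDegree_sub_le _ _).trans ?_
      simp
    nlinarith [this]
  omega

lemma coeff_P_eq_zero (p n : ℕ) {j : ℕ} (hj : j < n) : (P p n).coeff j = 0 := by
  have : (X ^ n : Polynomial ℤ) ∣ P p n := Dvd.intro _ rfl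
  exact (Polynomial.X_pow_dvd_iff.mp this) j hj

lemma fact_dvd_eval_zero (p n : ℕ) (j : ℕ) :
    (n.factorial : ℤ) ∣ (derivative^[j] (P p n)).eval 0 := by
  have h0 : (derivative^[j] (P p n)).eval 0 = (derivative^[j] (P p n)).coeff 0 :=
    (Polynomial.coeff_zero_eq_eval_zero _).symm
  rw [h0, Polynomial.coeff_iterate_derivative]
  rcases lt_or_ge j n with h | h
  · rw [coeff_P_eq_zero p n (by omega)]
    simp
  · rw [zero_add, Nat.descFactorial_self, nsmul_eq_mul]
    exact Dvd.dvd.mul_right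
      (Int.natCast_dvd_natCast.mpr (Nat.factorial_dvd_factorial h)) _

lemma comp_symm (p n : ℕ) : (P p n).comp (C (p:ℤ) - X) = P p n := by
  simp only [P, mul_comp, pow_comp, X_comp, sub_comp, C_comp]
  ring_nf

lemma iterate_derivative_comp (p : ℕ) (j : ℕ) (q : Polynomial ℤ) :
    derivative^[j] (q.comp (C (p:ℤ) - X))
      = C ((-1:ℤ)^j) * ((derivative^[j] q).comp (C (p:ℤ) - X)) := by
  induction j generalizing q with
  | zero => simp
  | succ j ih =>
    rw [Function.iterate_succ_apply]
    have hD : derivative (q.comp (C (p:ℤ) - X))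
        = (-1 : Polynomial ℤ) * ((derivative q).comp (C (p:ℤ) - X)) := by
      rw [Polynomial.derivative_comp]
      simp
    rw [hD]
    have : derivative^[j] ((-1 : Polynomial ℤ) * ((derivative q).comp (C (p:ℤ) - X)))
        = (-1 : Polynomial ℤ) * derivative^[j] ((derivative q).comp (C (p:ℤ) - X)) := by
      simp [neg_one_mul]
    rw [this, ih (derivative q), Function.iterate_succ_apply]
    rw [pow_succ]
    simp only [C_mul, C_neg, C_1]
    ring

lemma eval_p_eq (p n : ℕ) (j : ℕ) :
    (derivative^[j] (P p n)).eval (p:ℤ) = (-1:ℤ)^j * (derivative^[j] (P p n)).eval 0 := by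
  have h := iterate_derivative_comp p j (P p n)
  rw [comp_symm] at h
  have h2 : (derivative^[j] (P p n)).comp (C (p:ℤ) - X) = C ((-1:ℤ)^j) * derivative^[j] (P p n) := by
    have := congrArg (fun r => C ((-1:ℤ)^j) * r) h
    rw [← mul_assoc, ← C_mul, ← pow_add, ← two_mul] at this
    rw [(by simp : ((-1:ℤ))^(2*j) = 1)] at this
    simpa using this.symm
  have h3 := congrArg (fun r => Polynomial.eval (0:ℤ) r) h2
  simp only [Polynomial.eval_comp, Polynomial.eval_mul, Polynomial.eval_C, Polynomial.eval_sub,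
    Polynomial.eval_X, sub_zero] at h3
  simpa using h3

lemma fact_dvd_eval_p (p n : ℕ) (j : ℕ) :
    (n.factorial : ℤ) ∣ (derivative^[j] (P p n)).eval (p:ℤ) := by
  rw [eval_p_eq]
  exact Dvd.dvd.mul_left (fact_dvd_eval_zero p n j) _

lemma fact_dvd_Q_eval_zero (p n : ℕ) : (n.factorial : ℤ) ∣ (Q p n).eval 0 := by
  rw [Q]
  rw [Polynomial.eval_finset_sum]
  refine Finset.dvd_sum fun j _ => ?_
  rw [Polynomial.eval_mul]
  exact Dvd.dvd.mul_left (fact_dvd_eval_zero p n j) _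

lemma fact_dvd_Q_eval_p (p n : ℕ) : (n.factorial : ℤ) ∣ (Q p n).eval (p:ℤ) := by
  rw [Q, Polynomial.eval_finset_sum]
  refine Finset.dvd_sum fun j _ => ?_
  rw [Polynomial.eval_mul]
  exact Dvd.dvd.mul_left (fact_dvd_eval_p p n j) _

lemma Q_add_deriv (p n : ℕ) : Q p n + derivative (Q p n) = P p n := by
  have hstep : Q p n + derivative (Q p n)
      = ∑ j ∈ Finset.range (2*n+1),
          ((fun j => C ((-1:ℤ)^j) * derivative^[j] (P p n)) j
            - (fun j => C ((-1:ℤ)^j) * derivative^[j] (P p n)) (j+1)) := by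
    rw [Q, derivative_sum, ← Finset.sum_add_distrib]
    refine Finset.sum_congr rfl fun j _ => ?_
    simp only [derivative_C_mul, pow_succ, Function.iterate_succ_apply']
    simp only [C_mul, C_neg, C_1]
    ring
  rw [hstep, Finset.sum_range_sub']
  have hzero : derivative^[2*n+1] (P p n) = 0 :=
    Polynomial.iterate_derivative_eq_zero (by have := natDegree_P_le p n; omega)
  simp [hzero]




noncomputable def PR (p n : ℕ) : Polynomial ℝ := (P p n).map (Int.castRingHom ℝ)
noncomputable def QR (p n : ℕ) : Polynomial ℝ := (Q p n).map (Int.castRingHom ℝ)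

lemma PR_eval (p n : ℕ) (x : ℝ) : (PR p n).eval x = x ^ n * ((p:ℝ) - x) ^ n := by
  simp [PR, P]

lemma QR_add_deriv (p n : ℕ) : QR p n + derivative (QR p n) = PR p n := by
  rw [QR, PR, Polynomial.derivative_map, ← Polynomial.map_add, Q_add_deriv]

lemma hasDeriv (p n : ℕ) (x : ℝ) :
    HasDerivAt (fun x : ℝ => Real.exp x * (QR p n).eval x)
      (Real.exp x * (PR p n).eval x) x := by
  have h1 : HasDerivAt Real.exp (Real.exp x) x := Real.hasDerivAt_exp x
  have h2 : HasDerivAt (fun x => (QR p n).eval x) ((derivative (QR p n)).eval x) x :=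
    Polynomial.hasDerivAt _ x
  have := h1.mul h2
  refine this.congr_deriv ?_
  have := congrArg (fun q => Polynomial.eval x q) (QR_add_deriv p n)
  simp only [Polynomial.eval_add] at this
  rw [← this]
  ring

lemma integral_eq (p n : ℕ) :
    ∫ x in (0:ℝ)..(p:ℝ), Real.exp x * (PR p n).eval x
      = Real.exp p * (QR p n).eval (p:ℝ) - (QR p n).eval 0 := by
  have h := intervalIntegral.integral_eq_sub_of_hasDerivAt
    (a := (0:ℝ)) (b := ((p:ℕ):ℝ))
    (f := fun x : ℝ => Real.exp x * (QR p n).eval x)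
    (f' := fun x : ℝ => Real.exp x * (PR p n).eval x)
    (fun x _ => hasDeriv p n x)
    ((Real.continuous_exp.mul (Polynomial.continuous _)).intervalIntegrable _ _)
  rw [h]
  simp

lemma integral_pos (p n : ℕ) (hp : 1 ≤ p) :
    0 < ∫ x in (0:ℝ)..(p:ℝ), Real.exp x * (PR p n).eval x := by
  apply intervalIntegral.intervalIntegral_pos_of_pos_on
  · exact (Real.continuous_exp.mul (Polynomial.continuous _)).intervalIntegrable _ _
  · intro x hx
    rw [PR_eval]
    have hx0 : 0 < x := hx.1
    have hxp : x < p := hx.2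
    exact mul_pos (Real.exp_pos x) (mul_pos (pow_pos hx0 n) (pow_pos (by linarith) n))
  · exact_mod_cast Nat.lt_of_lt_of_le Nat.zero_lt_one hp

lemma integral_le (p n : ℕ) :
    (∫ x in (0:ℝ)..(p:ℝ), Real.exp x * (PR p n).eval x)
      ≤ (p:ℝ) * (Real.exp p * ((p:ℝ)^2) ^ n) := by
  have hle : ∀ x ∈ Set.Icc (0:ℝ) (p:ℝ),
      Real.exp x * (PR p n).eval x ≤ Real.exp p * ((p:ℝ)^2) ^ n := by
    intro x hx
    rw [PR_eval]
    have h1 : Real.exp x ≤ Real.exp p := Real.exp_le_exp.mpr hx.2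
    have h2 : x ^ n * ((p:ℝ) - x) ^ n ≤ ((p:ℝ)^2) ^ n := by
      have hx0 := hx.1
      have hxp := hx.2
      have : x ^ n * ((p:ℝ) - x) ^ n ≤ (p:ℝ)^n * (p:ℝ)^n := by
        apply mul_le_mul
        · exact pow_le_pow_left₀ hx0 hxp n
        · exact pow_le_pow_left₀ (by linarith) (by linarith) n
        · exact pow_nonneg (by linarith) n
        · positivity
      calc x ^ n * ((p:ℝ) - x) ^ n ≤ (p:ℝ)^n * (p:ℝ)^n := this
        _ = ((p:ℝ)^2) ^ n := by ring
    have hex : 0 ≤ Real.exp x := (Real.exp_pos x).le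
    have hev : 0 ≤ x ^ n * ((p:ℝ) - x) ^ n := by
      have hx0 := hx.1; have hxp := hx.2
      exact mul_nonneg (pow_nonneg hx0 n) (pow_nonneg (by linarith) n)
    nlinarith [Real.exp_pos p]
  have h0p : (0:ℝ) ≤ (p:ℝ) := by positivity
  calc (∫ x in (0:ℝ)..(p:ℝ), Real.exp x * (PR p n).eval x)
      ≤ ∫ _x in (0:ℝ)..(p:ℝ), Real.exp p * ((p:ℝ)^2) ^ n := by
        apply intervalIntegral.integral_mono_on h0p
          ((Real.continuous_exp.mul (Polynomial.continuous _)).intervalIntegrable _ _)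
          (intervalIntegrable_const) hle
    _ = (p:ℝ) * (Real.exp p * ((p:ℝ)^2) ^ n) := by
        rw [intervalIntegral.integral_const]
        simp

theorem exp_nat_ne_nat (p : ℕ) (hp : 1 ≤ p) (N : ℕ) : Real.exp p ≠ (N:ℝ) := by
  intro hN
  -- choose n with p * exp p * (p^2)^n < n!
  have hlim := FloorSemiring.tendsto_pow_div_factorial_atTop ((p:ℝ)^2)
  have hppos : (0:ℝ) < (p:ℝ) * Real.exp p := by positivity
  obtain ⟨n, hn⟩ := (hlim.eventually (gt_mem_nhds (inv_pos.mpr hppos))).exists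
  have hnf : (0:ℝ) < n.factorial := by positivity
  rw [div_lt_iff₀ hnf] at hn
  have hbound : (p:ℝ) * Real.exp p * ((p:ℝ)^2)^n < n.factorial := by
    have h1 : (p:ℝ) * Real.exp p * (((p:ℝ) * Real.exp p)⁻¹ * n.factorial) = n.factorial := by
      field_simp
    nlinarith [hn, hppos]
  set I := ∫ x in (0:ℝ)..(p:ℝ), Real.exp x * (PR p n).eval x with hI
  have hIpos : 0 < I := integral_pos p n hp
  have hIle : I ≤ (p:ℝ) * (Real.exp p * ((p:ℝ)^2) ^ n) := integral_le p n
  set a : ℤ := (N : ℤ) * (Q p n).eval (p:ℤ) - (Q p n).eval 0 with ha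
  have haI : (a:ℝ) = I := by
    rw [hI, integral_eq, hN, ha, QR]
    have e1 := Polynomial.eval_intCast_map (Int.castRingHom ℝ) (Q p n) ((p:ℕ):ℤ)
    have e0 := Polynomial.eval_intCast_map (Int.castRingHom ℝ) (Q p n) (0:ℤ)
    push_cast at e1 e0 ⊢
    rw [e1, e0]
    simp
  have hdvd : (n.factorial : ℤ) ∣ a :=
    dvd_sub ((fact_dvd_Q_eval_p p n).mul_left _) (fact_dvd_Q_eval_zero p n)
  have hapos : 0 < a := by
    have : (0:ℝ) < (a:ℝ) := haI ▸ hIpos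
    exact_mod_cast this
  have hge : (n.factorial : ℤ) ≤ a := Int.le_of_dvd hapos hdvd
  have : (n.factorial : ℝ) ≤ I := by
    rw [← haI]; exact_mod_cast hge
  nlinarith [this, hIle, hbound]

end NivenAux

open Real

lemma hc1 : Real.log 2 < 1 := by
  have := Real.log_two_lt_d9; linarith

lemma part1 (n : ℕ) (hn : 1 ≤ n) : eps n ≠ delta := by
  intro heq
  set L := Real.logb 2 (n:ℝ) with hL
  set m := ⌈L⌉ with hm
  set t := (m:ℝ) - L with ht
  have hne : t = tstar := by
    by_contra hne
    have := key_lt hne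
    rw [eps] at heq
    exact absurd heq (ne_of_lt this)
  have hnpos : (0:ℝ) < n := by exact_mod_cast hn
  have hlogn : Real.log n = (m:ℝ) * Real.log 2 + Real.log (Real.log 2) := by
    have h1 : (m:ℝ) - Real.log n / Real.log 2 = -Real.log (Real.log 2) / Real.log 2 := by
      rw [ht, tstar, hL, Real.logb] at hne
      exact hne
    field_simp at h1
    linarith [h1]
  have hm0 : 0 ≤ m := by
    rw [hm]
    apply Int.ceil_nonneg
    rw [hL]
    exact Real.logb_nonneg one_lt_two (by exact_mod_cast hn)
  set M := m.toNat with hM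
  have hMm : (M:ℝ) = (m:ℝ) := by
    rw [hM]; exact_mod_cast Int.toNat_of_nonneg hm0
  have hneq : (n:ℝ) = 2 ^ M * Real.log 2 := by
    have h0 : (n:ℝ) = Real.exp (Real.log n) := (Real.exp_log hnpos).symm
    rw [h0, hlogn, ← hMm, Real.exp_add, Real.exp_nat_mul, Real.exp_log hc0,
      Real.exp_log two_pos]
  have hfin : Real.exp (n:ℝ) = ((2 ^ (2 ^ M) : ℕ) : ℝ) := by
    have h2M : ((2 ^ M : ℕ) : ℝ) = (2:ℝ) ^ M := by push_cast; ring
    rw [hneq, ← h2M, Real.exp_nat_mul, Real.exp_log two_pos]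
    push_cast
    ring
  exact NivenAux.exp_nat_ne_nat n hn _ hfin

lemma part2 : IsLUB {x : ℝ | ∃ n : ℕ, 1 ≤ n ∧ x = eps n} delta := by
  constructor
  · rintro x ⟨n, hn, rfl⟩
    exact key_le _
  · intro b hb
    by_contra hlt
    push_neg at hlt
    have hclt : Real.log (Real.log 2) < 0 := Real.log_neg hc0 hc1
    have hts0 : 0 < tstar := by
      rw [tstar]
      exact div_pos (by linarith) hc0
    have hchalf : 1/2 < Real.log 2 := by
      have := Real.log_two_gt_d9; linarith
    have hts1 : tstar < 1 := by
      rw [tstar, div_lt_one hc0]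
      have hexp : Real.exp (-Real.log 2) < Real.log 2 := by
        rw [Real.exp_neg, Real.exp_log two_pos]
        rw [show ((2:ℝ))⁻¹ = 1/2 by ring]
        exact hchalf
      have := (Real.lt_log_iff_exp_lt hc0).mpr hexp
      linarith
    set g : ℝ → ℝ := fun t => 1 + t - Real.exp (Real.log 2 * t) with hg
    have hgc : Continuous g := by
      apply Continuous.sub
      · exact continuous_const.add continuous_id
      · exact Real.continuous_exp.comp (continuous_const.mul continuous_id)
    have hgts : g tstar = delta := by
      rw [hg]; simp only
      rw [← two_rpow]
      exact g_tstar
    have hε : 0 < delta - b := by linarith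
    obtain ⟨η, hη, hball⟩ :=
      Metric.continuousAt_iff.mp (hgc.continuousAt (x := tstar)) (delta - b) hε
    set q : ℝ := (2:ℝ) ^ tstar - 1 with hq
    have hqpos : 0 < q := by
      rw [hq, sub_pos]
      exact Real.one_lt_rpow_iff_of_pos two_pos |>.mpr (Or.inl ⟨one_lt_two, hts0⟩)
    obtain ⟨k₀, hk₀⟩ := pow_unbounded_of_one_lt (max (1/q) (1/(Real.log 2 * η)))
      (one_lt_two (α := ℝ))
    set B : ℝ := 2 ^ k₀ with hB
    have hB1 : 1/q < B := lt_of_le_of_lt (le_max_left _ _) hk₀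
    have hB2 : 1/(Real.log 2 * η) < B := lt_of_le_of_lt (le_max_right _ _) hk₀
    have hBpos : (0:ℝ) < B := by positivity
    set k : ℕ := k₀ + 1 with hk
    have hkr : (k:ℝ) = (k₀:ℝ) + 1 := by rw [hk]; push_cast; ring
    set a : ℝ := (k:ℝ) - tstar with ha
    set A : ℝ := (2:ℝ) ^ a with hA
    have hApos : 0 < A := Real.rpow_pos_of_pos two_pos a
    have hBA : B ≤ A := by
      rw [hB, hA]
      rw [show ((2:ℝ)) ^ k₀ = (2:ℝ) ^ ((k₀:ℕ):ℝ) from (Real.rpow_natCast 2 k₀).symm]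
      apply Real.rpow_le_rpow_left_iff (one_lt_two) |>.mpr
      rw [ha, hkr]
      linarith
    have h2k : (2:ℝ) ^ (k:ℕ) = A * (q + 1) := by
      rw [hA, hq]
      rw [show ((2:ℝ)) ^ (k:ℕ) = (2:ℝ) ^ ((k:ℕ):ℝ) from (Real.rpow_natCast 2 k).symm]
      rw [show ((k:ℕ):ℝ) = a + tstar by rw [ha]; ring]
      rw [Real.rpow_add two_pos]
      ring
    have hAq : 1 < A * q := by
      have h1 : 1/q < A := lt_of_lt_of_le hB1 hBA
      rw [div_lt_iff₀ hqpos] at h1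
      nlinarith
    set n : ℕ := ⌈A⌉₊ with hn
    have hn1 : 1 ≤ n := by
      rw [hn]
      exact Nat.one_le_ceil_iff.mpr hApos
    have hnA : A ≤ (n:ℝ) := Nat.le_ceil A
    have hnA2 : (n:ℝ) < A + 1 := Nat.ceil_lt_add_one hApos.le
    have hnpos : (0:ℝ) < (n:ℝ) := lt_of_lt_of_le hApos hnA
    set L := Real.logb 2 (n:ℝ) with hL
    have haA : a = Real.logb 2 A := by rw [hA, Real.logb_rpow two_pos (by norm_num)]
    have hLa : a ≤ L := by
      rw [hL, haA]
      exact Real.logb_le_logb_of_le one_lt_two hApos hnA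
    have hLk : L < (k:ℝ) := by
      have hlt2 : (n:ℝ) < (2:ℝ)^(k:ℕ) := by
        rw [h2k]; nlinarith
      rw [hL]
      calc Real.logb 2 (n:ℝ) < Real.logb 2 ((2:ℝ)^(k:ℕ)) :=
            Real.logb_lt_logb one_lt_two hnpos hlt2
        _ = (k:ℝ) := by
            rw [show ((2:ℝ)) ^ (k:ℕ) = (2:ℝ) ^ ((k:ℕ):ℝ) from (Real.rpow_natCast 2 k).symm,
              Real.logb_rpow two_pos (by norm_num)]
    have hka : (k:ℝ) - 1 < a := by rw [ha]; linarith
    have hceil : ⌈L⌉ = (k:ℤ) := by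
      rw [Int.ceil_eq_iff]
      refine ⟨?_, ?_⟩
      · push_cast
        have h1 : ((k:ℤ):ℝ) = (k:ℝ) := by push_cast; ring
        linarith [hka, hLa]
      · push_cast
        linarith [hLk]
    set t : ℝ := (k:ℝ) - L with htdef
    have htclose : dist t tstar < η := by
      rw [Real.dist_eq]
      have h1 : t - tstar = a - L := by rw [htdef, ha]; ring
      have h2 : L - a ≤ 1/A / Real.log 2 := by
        have hup : L ≤ Real.logb 2 (A + 1) := by
          rw [hL]
          exact Real.logb_le_logb_of_le one_lt_two hnpos (by linarith)
        have hlog : Real.log (A + 1) - Real.log A ≤ 1/A := by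
          rw [← Real.log_div (by linarith) (ne_of_gt hApos)]
          have hx : (A + 1)/A = 1 + 1/A := by field_simp
          rw [hx]
          have := Real.log_le_sub_one_of_pos (show (0:ℝ) < 1 + 1/A by positivity)
          linarith
        have e1 : Real.logb 2 (A+1) = Real.log (A+1) / Real.log 2 := by rw [Real.logb]
        have e2 : a = Real.log A / Real.log 2 := by rw [haA, Real.logb]
        have e3 : (Real.log (A+1) - Real.log A) / Real.log 2 ≤ (1/A) / Real.log 2 :=
          (div_le_div_iff_of_pos_right hc0).mpr hlog
        rw [e1] at hup
        rw [e2]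
        calc L - Real.log A / Real.log 2
            ≤ Real.log (A+1) / Real.log 2 - Real.log A / Real.log 2 := by linarith
          _ = (Real.log (A+1) - Real.log A) / Real.log 2 := by ring
          _ ≤ (1/A) / Real.log 2 := e3
      have h3 : 1/A/Real.log 2 < η := by
        have hcη : 0 < Real.log 2 * η := by positivity
        have hBlt : 1/(Real.log 2 * η) < A := lt_of_lt_of_le hB2 hBA
        rw [div_lt_iff₀ hcη] at hBlt
        rw [div_div, div_lt_iff₀ (by positivity)]
        nlinarith
      have h4 : 0 ≤ L - a := by linarith
      rw [h1, abs_sub_comm a L, abs_of_nonneg h4]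
      linarith
    have hgt : g t > b := by
      have hd := hball htclose
      rw [hgts, Real.dist_eq] at hd
      have := abs_lt.mp hd
      linarith [this.1]
    have heps : eps (n:ℝ) = g t := by
      have hcast : ((⌈Real.logb 2 ((n:ℕ):ℝ)⌉ : ℤ) : ℝ) = (k:ℝ) := by
        rw [← hL, hceil]; push_cast; ring
      rw [eps, hcast, ← hL, ← htdef, two_rpow, hg]
    have : eps (n:ℝ) ≤ b := hb ⟨n, hn1, rfl⟩
    rw [heps] at this
    linarith


theorem eps_sup_on_integers :
    (∀ n : ℕ, 1 ≤ n → eps n ≠ delta) ∧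
    IsLUB {x : ℝ | ∃ n : ℕ, 1 ≤ n ∧ x = eps n} delta :=
  ⟨part1, part2⟩
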